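/- Let A = [A_{i,j}]_{i,j=1}^m ∈ M_m(M_n) be positive semidefinite. Then both (tr_2(A^τ)) ⊗ I_n ≥ A^τ and (tr_2(A^τ)) ⊗ I_n ≥ −A^τ hold. -/

import Mathlib

open Matrix Kronecker BigOperators
open scoped ComplexOrder

noncomputable section

/-- The partial transpose of a block matrix `A ∈ M_m(M_n)`. -/
def ptrans {m n : ℕ} (A : Matrix (Fin m × Fin n) (Fin m × Fin n) ℂ) :
    Matrix (Fin m × Fin n) (Fin m × Fin n) ℂ :=
  fun p q => A (q.1, p.2) (p.1, q.2)

/-- The second partial trace `tr₂ A = [tr A_{i,j}] ∈ M_m`. -/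
def tr2 {m n : ℕ} (A : Matrix (Fin m × Fin n) (Fin m × Fin n) ℂ) :
    Matrix (Fin m) (Fin m) ℂ :=
  fun i j => ∑ r, A (i, r) (j, r)

namespace Stmt7Aux

variable {m n : ℕ}

/-- Auxiliary vectors. -/
def ufun (x : Fin m × Fin n → ℂ) (r s : Fin n) : Fin m × Fin n → ℂ :=
  fun p => if p.2 = r then star (x (p.1, s)) else 0

/-- Auxiliary quadruple sums. -/
def Sfun (A : Matrix (Fin m × Fin n) (Fin m × Fin n) ℂ) (x : Fin m × Fin n → ℂ)
    (a b c d : Fin n) : ℂ :=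
  ∑ i, ∑ j, x (i, b) * A (i, a) (j, c) * star (x (j, d))

theorem quad (A : Matrix (Fin m × Fin n) (Fin m × Fin n) ℂ) (x : Fin m × Fin n → ℂ)
    (a b c d : Fin n) :
    star (ufun x a b) ⬝ᵥ (A *ᵥ ufun x c d) = Sfun A x a b c d := by
  simp only [ufun, Sfun, dotProduct, mulVec, Pi.star_apply, apply_ite (star : ℂ → ℂ),
    star_star, star_zero, Fintype.sum_prod_type, ite_mul, mul_ite, zero_mul, mul_zero,
    Finset.sum_ite_eq, Finset.sum_ite_eq', Finset.mem_univ, if_true]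
  refine Finset.sum_congr rfl fun i _ => ?_
  rw [Finset.mul_sum]
  exact Finset.sum_congr rfl fun j _ => by ring

theorem claimB (A : Matrix (Fin m × Fin n) (Fin m × Fin n) ℂ) (x : Fin m × Fin n → ℂ) :
    ∑ r, ∑ s, Sfun A x r s s r = star x ⬝ᵥ (ptrans A *ᵥ x) := by
  have h1 : star x ⬝ᵥ (ptrans A *ᵥ x)
      = ∑ w : (Fin m × Fin n) × (Fin m × Fin n),
          star (x w.1) * A (w.2.1, w.1.2) (w.1.1, w.2.2) * x w.2 := by
    rw [Fintype.sum_prod_type]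
    simp only [dotProduct, mulVec, ptrans, Pi.star_apply, Finset.mul_sum]
    exact Finset.sum_congr rfl fun p _ => Finset.sum_congr rfl fun q _ => by ring
  have h2 : (∑ r, ∑ s, Sfun A x r s s r)
      = ∑ z : Fin n × Fin n × Fin m × Fin m,
          x (z.2.2.1, z.2.1) * A (z.2.2.1, z.1) (z.2.2.2, z.2.1) * star (x (z.2.2.2, z.1)) := by
    simp only [Sfun, Fintype.sum_prod_type]
  rw [h1, h2]
  exact Fintype.sum_equiv
    ⟨fun z => ((z.2.2.2, z.1), (z.2.2.1, z.2.1)),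
     fun w => (w.1.2, w.2.2, w.2.1, w.1.1), fun _ => rfl, fun _ => rfl⟩
    _ _ (fun z => by dsimp; ring)

theorem claimA (A : Matrix (Fin m × Fin n) (Fin m × Fin n) ℂ) (x : Fin m × Fin n → ℂ) :
    ∑ r, ∑ s, Sfun A x r s r s
      = star x ⬝ᵥ ((tr2 (ptrans A) ⊗ₖ (1 : Matrix (Fin n) (Fin n) ℂ)) *ᵥ x) := by
  have h1 : star x ⬝ᵥ ((tr2 (ptrans A) ⊗ₖ (1 : Matrix (Fin n) (Fin n) ℂ)) *ᵥ x)
      = ∑ w : (Fin m × Fin n) × (Fin m × Fin n),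
          star (x w.1) * ((∑ r, A (w.2.1, r) (w.1.1, r)) *
            (if w.1.2 = w.2.2 then 1 else 0)) * x w.2 := by
    rw [Fintype.sum_prod_type]
    simp only [dotProduct, mulVec, kroneckerMap_apply, tr2, ptrans, one_apply,
      Pi.star_apply, Finset.mul_sum]
    exact Finset.sum_congr rfl fun p _ => Finset.sum_congr rfl fun q _ => by ring
  have h2 : (∑ r, ∑ s, Sfun A x r s r s)
      = ∑ z : Fin n × Fin n × Fin m × Fin m,
          x (z.2.2.1, z.2.1) * A (z.2.2.1, z.1) (z.2.2.2, z.1) * star (x (z.2.2.2, z.2.1)) := by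
    simp only [Sfun, Fintype.sum_prod_type]
  rw [h1, h2]
  -- collapse the ite in h1's RHS: sum over w.2.2 with condition w.1.2 = w.2.2
  have h3 : (∑ w : (Fin m × Fin n) × (Fin m × Fin n),
          star (x w.1) * ((∑ r, A (w.2.1, r) (w.1.1, r)) *
            (if w.1.2 = w.2.2 then 1 else 0)) * x w.2)
      = ∑ i : Fin m, ∑ s : Fin n, ∑ j : Fin m, ∑ r : Fin n,
          star (x (i, s)) * A (j, r) (i, r) * x (j, s) := by
    simp only [Fintype.sum_prod_type, mul_ite, ite_mul, mul_one, mul_zero, zero_mul,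
      Finset.sum_ite_eq, Finset.sum_ite_eq', Finset.mem_univ, if_true]
    refine Finset.sum_congr rfl fun i _ => Finset.sum_congr rfl fun s _ =>
      Finset.sum_congr rfl fun j _ => ?_
    rw [Finset.mul_sum, Finset.sum_mul]
  rw [h3]
  have h4 : (∑ i : Fin m, ∑ s : Fin n, ∑ j : Fin m, ∑ r : Fin n,
          star (x (i, s)) * A (j, r) (i, r) * x (j, s))
      = ∑ w : Fin m × Fin n × Fin m × Fin n,
          star (x (w.1, w.2.1)) * A (w.2.2.1, w.2.2.2) (w.1, w.2.2.2) * x (w.2.2.1, w.2.1) := by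
    simp only [Fintype.sum_prod_type]
  rw [h4]
  exact Fintype.sum_equiv
    ⟨fun z => (z.2.2.2, z.2.1, z.2.2.1, z.1),
     fun w => (w.2.2.2, w.2.1, w.2.2.1, w.1), fun _ => rfl, fun _ => rfl⟩
    _ _ (fun z => by dsimp; ring)

theorem swap1 (A : Matrix (Fin m × Fin n) (Fin m × Fin n) ℂ) (x : Fin m × Fin n → ℂ) :
    ∑ r, ∑ s, Sfun A x s r s r = ∑ r, ∑ s, Sfun A x r s r s :=
  Finset.sum_comm

theorem swap2 (A : Matrix (Fin m × Fin n) (Fin m × Fin n) ℂ) (x : Fin m × Fin n → ℂ) :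
    ∑ r, ∑ s, Sfun A x s r r s = ∑ r, ∑ s, Sfun A x r s s r :=
  Finset.sum_comm

theorem main (A : Matrix (Fin m × Fin n) (Fin m × Fin n) ℂ) (hA : A.PosSemidef)
    (ε : ℂ) (hε1 : ε * ε = 1) (hε2 : star ε = ε) (x : Fin m × Fin n → ℂ) :
    0 ≤ star x ⬝ᵥ ((tr2 (ptrans A) ⊗ₖ (1 : Matrix (Fin n) (Fin n) ℂ)) *ᵥ x)
        - ε * (star x ⬝ᵥ (ptrans A *ᵥ x)) := by
  have hQd : ∀ r s : Fin n,
      star (ufun x r s - ε • ufun x s r) ⬝ᵥ (A *ᵥ (ufun x r s - ε • ufun x s r))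
        = Sfun A x r s r s - ε * Sfun A x r s s r - ε * Sfun A x s r r s
          + Sfun A x s r s r := by
    intro r s
    simp only [star_sub, star_smul, mulVec_sub, mulVec_smul, sub_dotProduct,
      dotProduct_sub, smul_dotProduct, dotProduct_smul, smul_eq_mul, hε2]
    rw [quad, quad, quad, quad]
    ring_nf
    linear_combination (Sfun A x s r s r) * hε1
  have key2 : (2 : ℂ) * (star x ⬝ᵥ ((tr2 (ptrans A) ⊗ₖ (1 : Matrix (Fin n) (Fin n) ℂ)) *ᵥ x)
        - ε * (star x ⬝ᵥ (ptrans A *ᵥ x)))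
      = ∑ r, ∑ s,
          (star (ufun x r s - ε • ufun x s r) ⬝ᵥ (A *ᵥ (ufun x r s - ε • ufun x s r))) := by
    rw [← claimA A x, ← claimB A x]
    calc (2 : ℂ) * ((∑ r, ∑ s, Sfun A x r s r s) - ε * ∑ r, ∑ s, Sfun A x r s s r)
        = ∑ r, ∑ s, (Sfun A x r s r s - ε * Sfun A x r s s r
            - ε * Sfun A x s r r s + Sfun A x s r s r) := by
          simp only [Finset.sum_add_distrib, Finset.sum_sub_distrib, ← Finset.mul_sum]
          rw [swap1, swap2]
          ring
      _ = _ := Finset.sum_congr rfl fun r _ => Finset.sum_congr rfl fun s _ => (hQd r s).symm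
  have h2 : (0 : ℂ) ≤ 2⁻¹ := by
    rw [show ((2 : ℂ))⁻¹ = (((2 : ℝ))⁻¹ : ℂ) by norm_num]
    exact_mod_cast (by norm_num : (0:ℝ) ≤ 2⁻¹)
  have hnn : (0 : ℂ) ≤ (2 : ℂ) * (star x ⬝ᵥ ((tr2 (ptrans A) ⊗ₖ (1 : Matrix (Fin n) (Fin n) ℂ)) *ᵥ x)
        - ε * (star x ⬝ᵥ (ptrans A *ᵥ x))) := by
    rw [key2]
    exact Finset.sum_nonneg fun r _ => Finset.sum_nonneg fun s _ => hA.dotProduct_mulVec_nonneg _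
  have := mul_nonneg h2 hnn
  calc (0:ℂ) ≤ 2⁻¹ * ((2:ℂ) * _) := this
    _ = _ := by ring

end Stmt7Aux

open Stmt7Aux in
/-- If `A ∈ M_m(M_n)` is positive semidefinite, then
`(tr₂ Aᵗ) ⊗ I_n ≥ Aᵗ` and `(tr₂ Aᵗ) ⊗ I_n ≥ -Aᵗ`. -/
theorem stmt7 {m n : ℕ} (A : Matrix (Fin m × Fin n) (Fin m × Fin n) ℂ)
    (hA : A.PosSemidef) :
    (tr2 (ptrans A) ⊗ₖ (1 : Matrix (Fin n) (Fin n) ℂ) - ptrans A).PosSemidef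
    ∧ (tr2 (ptrans A) ⊗ₖ (1 : Matrix (Fin n) (Fin n) ℂ) - -(ptrans A)).PosSemidef := by
  have hB : (ptrans A).IsHermitian := by
    ext p q
    simp only [conjTranspose_apply, ptrans]
    exact hA.1.apply _ _
  have hT : (tr2 (ptrans A)).IsHermitian := by
    ext i j
    simp only [conjTranspose_apply, tr2, star_sum]
    exact Finset.sum_congr rfl fun r _ => hB.apply _ _
  have hK : (tr2 (ptrans A) ⊗ₖ (1 : Matrix (Fin n) (Fin n) ℂ)).IsHermitian := by
    ext p q
    simp only [conjTranspose_apply, kroneckerMap_apply, star_mul']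
    rw [hT.apply, (Matrix.isHermitian_one (α := ℂ) (n := Fin n)).apply, mul_comm]
  constructor
  · refine .of_dotProduct_mulVec_nonneg (hK.sub hB) fun x => ?_
    have := Stmt7Aux.main A hA 1 (by norm_num) (by simp) x
    simpa [sub_mulVec, dotProduct_sub] using this
  · refine .of_dotProduct_mulVec_nonneg (hK.sub hB.neg) fun x => ?_
    have := Stmt7Aux.main A hA (-1) (by norm_num) (by simp) x
    simpa [sub_mulVec, dotProduct_sub, neg_mulVec, dotProduct_neg, sub_neg_eq_add,
      add_mulVec, dotProduct_add] using this
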